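/- Let f : [0,1] → ℝ be continuous and define g(x) := f(1−x). Then for every q > 1, every integer n ≥ 1 and every x ∈ [0,1]: R_{n,q}(f,x) = R_{n,1/q}(g,1−x) and R_{∞,q}(f,x) = R_{∞,1/q}(g,1−x). -/

import Mathlib

open Finset Filter

noncomputable section

/-- The q-integer `[n]_q = 1 + q + ⋯ + q^(n-1)`. -/
def qInt (q : ℝ) (n : ℕ) : ℝ := ∑ i ∈ Finset.range n, q ^ i

/-- The q-factorial `[n]_q!`. -/
def qFact (q : ℝ) : ℕ → ℝ
  | 0 => 1
  | n + 1 => qFact q n * qInt q (n + 1)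

/-- The q-binomial coefficient `[n k]_q`. -/
def qBinom (q : ℝ) (n k : ℕ) : ℝ := qFact q n / (qFact q k * qFact q (n - k))

/-- The Lupaş basis function `b_{nk}(q;x)`. -/
def lupasB (q : ℝ) (n k : ℕ) (x : ℝ) : ℝ :=
  qBinom q n k * q ^ (k * (k - 1) / 2) * x ^ k * (1 - x) ^ (n - k) /
    ∏ j ∈ Finset.range (n - 1), (1 - x + q ^ (j + 1) * x)

/-- The limit Lupaş basis function `b_{∞k}(q;x)` (for `0 < q < 1`, `x ∈ [0,1)`). -/
def lupasBInf (q : ℝ) (k : ℕ) (x : ℝ) : ℝ :=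
  q ^ (k * (k - 1) / 2) * (x / (1 - x)) ^ k /
    ((1 - q) ^ k * qFact q k * ∏' j : ℕ, (1 + q ^ j * (x / (1 - x))))

/-- The Lupaş q-analogue of the Bernstein operator `R_{n,q}(f,x)`. -/
def lupasR (q : ℝ) (n : ℕ) (f : ℝ → ℝ) (x : ℝ) : ℝ :=
  ∑ k ∈ Finset.range (n + 1), f (qInt q k / qInt q n) * lupasB q n k x

/-- The limit q-Lupaş operator `R_{∞,q}(f,x)` for `0 < q < 1`. -/
def lupasRInfLow (q : ℝ) (f : ℝ → ℝ) (x : ℝ) : ℝ :=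
  if x = 1 then f 1 else ∑' k : ℕ, f (1 - q ^ k) * lupasBInf q k x

/-- The limit q-Lupaş operator `R_{∞,q}(f,x)`: for `q > 1` it is defined by
reflection, `R_{∞,q}(f,x) = R_{∞,1/q}(g,1-x)` with `g(x) = f(1-x)`. -/
def lupasRInf (q : ℝ) (f : ℝ → ℝ) (x : ℝ) : ℝ :=
  if 1 < q then lupasRInfLow (1 / q) (fun t => f (1 - t)) (1 - x)
  else lupasRInfLow q f x

/-- The transform `v(q,x) = qx/(1-x+qx)`. -/
def vq (q x : ℝ) : ℝ := q * x / (1 - x + q * x)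

/-- `L_{n,q}(f,x) = R_{n,q}(f,x) - R_{∞,q}(f,x)`. -/
def lupasL (q : ℝ) (n : ℕ) (f : ℝ → ℝ) (x : ℝ) : ℝ :=
  lupasR q n f x - lupasRInf q f x

/-- The modulus of continuity `ω(f,t)` of `f` on `[0,1]`. -/
def omega1 (f : ℝ → ℝ) (t : ℝ) : ℝ :=
  sSup {d | ∃ x ∈ Set.Icc (0:ℝ) 1, ∃ y ∈ Set.Icc (0:ℝ) 1, |x - y| ≤ t ∧ d = |f x - f y|}

/-- The second modulus of smoothness `ω₂(f,t)` of `f` on `[0,1]`. -/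
def omega2 (f : ℝ → ℝ) (t : ℝ) : ℝ :=
  sSup {d | ∃ h, 0 ≤ h ∧ h ≤ t ∧ ∃ x, 0 ≤ x ∧ x ≤ 1 - 2 * h ∧
    d = |f (x + 2 * h) - 2 * f (x + h) + f x|}
-- helper lemmas
lemma tri (m : ℕ) : (m + 1) * m / 2 = m * (m - 1) / 2 + m := by
  cases m with
  | zero => rfl
  | succ s =>
    have h : (s + 1 + 1) * (s + 1) = (s + 1) * s + 2 * (s + 1) := by ring
    rw [h, Nat.add_mul_div_left _ _ (by norm_num)]
    simp

lemma qInt_mul (q : ℝ) (hq : q ≠ 0) (m : ℕ) : qInt (1/q) (m+1) * q ^ m = qInt q (m+1) := by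
  unfold qInt
  rw [Finset.sum_mul]
  rw [← Finset.sum_range_reflect (fun i => (1/q) ^ i * q ^ m) (m+1)]
  apply Finset.sum_congr rfl
  intro i hi
  rw [Finset.mem_range] at hi
  rw [one_div, inv_pow]
  have h1 : (m + 1) - 1 - i = m - i := by omega
  have h2 : q ^ m = q ^ (m - i) * q ^ i := by rw [← pow_add]; congr 1; omega
  rw [h1, h2, inv_mul_cancel_left₀ (pow_ne_zero _ hq)]

lemma qFact_mul (q : ℝ) (hq : q ≠ 0) (m : ℕ) :
    qFact (1/q) m * q ^ (m * (m - 1) / 2) = qFact q m := by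
  induction m with
  | zero => simp [qFact]
  | succ s ih =>
    show qFact (1/q) s * qInt (1/q) (s+1) * q ^ ((s+1) * s / 2) = qFact q s * qInt q (s+1)
    rw [tri, pow_add, ← ih, ← qInt_mul q hq s]
    ring

lemma qFact_pos (q : ℝ) (hq : 0 < q) (m : ℕ) : 0 < qFact q m := by
  induction m with
  | zero => norm_num [qFact]
  | succ s ih =>
    refine mul_pos ih ?_
    unfold qInt
    exact Finset.sum_pos (fun i _ => pow_pos hq i) (by simp)


lemma qInt_split (q : ℝ) (n k : ℕ) (hk : k ≤ n) :
    qInt q k + q ^ k * qInt q (n - k) = qInt q n := by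
  unfold qInt
  rw [Finset.mul_sum]
  have : ∀ j, q ^ k * q ^ j = q ^ (k + j) := fun j => (pow_add q k j).symm
  simp_rw [this]
  conv_rhs => rw [show n = k + (n - k) from by omega]
  rw [Finset.sum_range_add]

lemma qInt_pos (q : ℝ) (hq : 0 < q) (n : ℕ) (hn : 1 ≤ n) : 0 < qInt q n :=
  Finset.sum_pos (fun i _ => pow_pos hq i) (by simp; omega)

-- the q-ratio reflection
lemma qratio (q : ℝ) (hq : 1 < q) (n k : ℕ) (hn : 1 ≤ n) (hk : k ≤ n) :
    qInt q k / qInt q n = 1 - qInt (1/q) (n-k) / qInt (1/q) n := by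
  have hq0 : (0:ℝ) < q := lt_trans one_pos hq
  have hq0' : q ≠ 0 := ne_of_gt hq0
  have hN : (0:ℝ) < qInt q n := qInt_pos q hq0 n hn
  rcases eq_or_lt_of_le hk with rfl | hlt
  · have h0 : qInt (1/q) 0 = 0 := by simp [qInt]
    rw [Nat.sub_self, h0]
    simp [div_self (ne_of_gt hN)]
  · have e1 : qInt (1/q) n = qInt q n / q ^ (n - 1) := by
      have := qInt_mul q hq0' (n - 1)
      rw [show n - 1 + 1 = n from by omega] at this
      field_simp [← this]
      exact this
    have e2 : qInt (1/q) (n - k) = qInt q (n - k) / q ^ (n - k - 1) := by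
      have := qInt_mul q hq0' (n - k - 1)
      rw [show n - k - 1 + 1 = n - k from by omega] at this
      field_simp [← this]
      exact this
    rw [e1, e2]
    have hpow : q ^ (n - 1) = q ^ (n - k - 1) * q ^ k := by
      rw [← pow_add]; congr 1; omega
    have hsplit := qInt_split q n k hk
    rw [div_div_div_eq]
    rw [hpow]
    have h1 : q ^ (n - k - 1) ≠ 0 := pow_ne_zero _ hq0'
    have h2 : q ^ k ≠ 0 := pow_ne_zero _ hq0'
    field_simp
    linear_combination hsplit

lemma exp_eq (n : ℕ) : ∑ j ∈ range (n-1), (j+1) = n*(n-1)/2 := by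
  cases n with
  | zero => simp
  | succ s =>
    simp only [Nat.succ_sub_one]
    rw [tri s, Finset.sum_add_distrib, Finset.sum_range_id]
    simp

lemma qFact_inv_eq (q : ℝ) (hq : q ≠ 0) (m : ℕ) :
    qFact (1/q) m = qFact q m / q ^ (m*(m-1)/2) := by
  rw [← qFact_mul q hq m]
  field_simp

lemma lupasB_refl (q x : ℝ) (hq : 1 < q) (hx0 : 0 ≤ x) (hx1 : x ≤ 1) (n k : ℕ) (hk : k ≤ n) :
    lupasB q n k x = lupasB (1/q) n (n-k) (1-x) := by
  have hq0 : (0:ℝ) < q := lt_trans one_pos hq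
  have hq0' : q ≠ 0 := ne_of_gt hq0
  have hDpos : 0 < ∏ j ∈ range (n-1), (1 - x + q^(j+1) * x) := by
    apply Finset.prod_pos
    intro j _
    have h1 : (1:ℝ) ≤ q ^ (j+1) := one_le_pow₀ (le_of_lt hq)
    nlinarith
  have hD' : (∏ j ∈ range (n-1), (x + (1/q)^(j+1) * (1-x))) * q ^ (n*(n-1)/2)
      = ∏ j ∈ range (n-1), (1 - x + q^(j+1) * x) := by
    rw [← exp_eq n, ← Finset.prod_pow_eq_pow_sum, ← Finset.prod_mul_distrib]
    apply Finset.prod_congr rfl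
    intro j _
    rw [one_div, inv_pow]
    have hqj : (q ^ (j+1))⁻¹ * q ^ (j+1) = 1 := inv_mul_cancel₀ (pow_ne_zero _ hq0')
    linear_combination (1 - x) * hqj
  have hQ : (0:ℝ) < q ^ (n*(n-1)/2) := pow_pos hq0 _
  have hD'pos : 0 < ∏ j ∈ range (n-1), (x + (1/q)^(j+1) * (1-x)) := by
    apply Finset.prod_pos
    intro j _
    have hc : 0 < (1/q:ℝ)^(j+1) := by positivity
    rcases eq_or_lt_of_le hx1 with h | h
    · rw [h]; norm_num
    · nlinarith [mul_pos hc (by linarith : (0:ℝ) < 1 - x)]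
  have hFn : qFact q n ≠ 0 := ne_of_gt (qFact_pos q hq0 n)
  have hFk : qFact q k ≠ 0 := ne_of_gt (qFact_pos q hq0 k)
  have hFnk : qFact q (n-k) ≠ 0 := ne_of_gt (qFact_pos q hq0 (n-k))
  unfold lupasB qBinom
  rw [show n - (n - k) = k from by omega, sub_sub_cancel]
  rw [qFact_inv_eq q hq0' n, qFact_inv_eq q hq0' k, qFact_inv_eq q hq0' (n-k)]
  rw [div_eq_div_iff (ne_of_gt hDpos) (ne_of_gt hD'pos)]
  rw [← hD']
  field_simp
  have hm : q ^ ((n - k) * (n - k - 1) / 2) * q⁻¹ ^ ((n - k) * (n - k - 1) / 2) = 1 := by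
    rw [← mul_pow, mul_inv_cancel₀ hq0', one_pow]
  linear_combination (-(x ^ k * (∏ x_1 ∈ range (n - 1), (x + (1 - x) * (1 / q) ^ (x_1 + 1))) * (1 - x) ^ (n - k))) * hm

theorem lupasR_reflection (f : ℝ → ℝ) (hf : ContinuousOn f (Set.Icc 0 1))
    (q : ℝ) (hq : 1 < q) (n : ℕ) (hn : 1 ≤ n) (x : ℝ) (hx : x ∈ Set.Icc (0:ℝ) 1) :
    lupasR q n f x = lupasR (1 / q) n (fun t => f (1 - t)) (1 - x) ∧
    lupasRInf q f x = lupasRInf (1 / q) (fun t => f (1 - t)) (1 - x) := by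
  have hq0 : (0:ℝ) < q := lt_trans one_pos hq
  constructor
  · unfold lupasR
    rw [← Finset.sum_range_reflect
      (fun k => (fun t => f (1 - t)) (qInt (1/q) k / qInt (1/q) n) * lupasB (1/q) n k (1-x)) (n+1)]
    apply Finset.sum_congr rfl
    intro k hk
    rw [Finset.mem_range] at hk
    have hk' : k ≤ n := by omega
    simp only
    rw [show n + 1 - 1 - k = n - k from by omega]
    rw [lupasB_refl q x hq hx.1 hx.2 n k hk', qratio q hq n k hn hk']
  · have h2 : ¬ (1 < 1/q) := by
      rw [not_lt]
      exact le_of_lt ((div_lt_one hq0).2 hq)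
    rw [lupasRInf, lupasRInf, if_pos hq, if_neg h2]
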